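/- Let α ∈ ℝ and let A, B be real n×n matrices with B diagonal. Suppose for all i: b_ii < −α² if α ≥ 0, and b_ii < 3α² − 2a_ii·α if α < 0; and suppose A satisfies a_ii < 2α and |a_ii − 2α| > Σ_{j≠i}|a_ij| for all i. Then α is not an eigenvalue of the block matrix à = [[A,B],[I,O]]. -/

import Mathlib

open Matrix in

theorem alpha_not_eigenvalue {n : ℕ} (α : ℝ) (A B : Matrix (Fin n) (Fin n) ℝ)
    (hBdiag : ∀ i j, i ≠ j → B i j = 0)
    (hB : ∀ i, (0 ≤ α → B i i < -α ^ 2) ∧ (α < 0 → B i i < 3 * α ^ 2 - 2 * A i i * α))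
    (hAneg : ∀ i, A i i < 2 * α)
    (hAdom : ∀ i, ∑ j ∈ Finset.univ.erase i, |A i j| < |A i i - 2 * α|) :
    (α : ℂ) ∉ spectrum ℂ ((Matrix.fromBlocks A B (1 : Matrix (Fin n) (Fin n) ℝ)
        (0 : Matrix (Fin n) (Fin n) ℝ)).map (Complex.ofReal)) := by
  classical
  set M : Matrix (Fin n) (Fin n) ℝ := α ^ 2 • (1 : Matrix (Fin n) (Fin n) ℝ) - α • A - B with hMdef
  -- M is strictly diagonally dominant, hence has nonzero determinant
  have hMdet : M.det ≠ 0 := by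
    apply det_ne_zero_of_sum_row_lt_diag
    intro k
    have hdiag : M k k = α ^ 2 - α * A k k - B k k := by
      simp [hMdef, Matrix.one_apply, Matrix.sub_apply, Matrix.smul_apply]
    have hdom := hAdom k
    have habs : |A k k - 2 * α| = 2 * α - A k k := by
      rw [abs_of_neg (by linarith [hAneg k])]; ring
    rw [habs] at hdom
    have hsum_nonneg : (0:ℝ) ≤ ∑ j ∈ Finset.univ.erase k, |A k j| :=
      Finset.sum_nonneg fun j _ => abs_nonneg _
    have hMkk : |α| * (2 * α - A k k) < M k k := by
      rcases le_or_gt 0 α with hα | hα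
      · have := (hB k).1 hα
        rw [abs_of_nonneg hα, hdiag]; nlinarith
      · have := (hB k).2 hα
        rw [abs_of_neg hα, hdiag]; nlinarith
    have hoff : ∑ j ∈ Finset.univ.erase k, ‖M k j‖ =
        |α| * ∑ j ∈ Finset.univ.erase k, |A k j| := by
      rw [Finset.mul_sum]
      apply Finset.sum_congr rfl
      intro j hj
      have hjk : j ≠ k := Finset.ne_of_mem_erase hj
      have : M k j = -(α * A k j) := by
        simp [hMdef, Matrix.one_apply_ne (Ne.symm hjk), Matrix.sub_apply, Matrix.smul_apply,
          hBdiag k j (Ne.symm hjk)]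
      rw [this, Real.norm_eq_abs, abs_neg, abs_mul]
    have h1 : |α| * ∑ j ∈ Finset.univ.erase k, |A k j| ≤ |α| * (2 * α - A k k) :=
      mul_le_mul_of_nonneg_left hdom.le (abs_nonneg α)
    have hMkkpos : 0 < M k k :=
      lt_of_le_of_lt (mul_nonneg (abs_nonneg α) (by linarith [hAneg k])) hMkk
    rw [hoff, Real.norm_eq_abs, abs_of_pos hMkkpos]
    exact lt_of_le_of_lt h1 hMkk
  set Ac : Matrix (Fin n) (Fin n) ℂ := A.map Complex.ofReal with hAc
  set Bc : Matrix (Fin n) (Fin n) ℂ := B.map Complex.ofReal with hBc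
  set Mc : Matrix (Fin n) (Fin n) ℂ :=
    (α:ℂ) ^ 2 • (1 : Matrix (Fin n) (Fin n) ℂ) - (α:ℂ) • Ac - Bc with hMc
  have hMcM : Mc = M.map Complex.ofReal := by
    ext i j
    by_cases h : i = j <;>
      simp [hMc, hMdef, hAc, hBc, Matrix.one_apply, h, Matrix.sub_apply, Matrix.smul_apply] <;>
      push_cast <;> ring
  have hMcdet : Mc.det ≠ 0 := by
    have hdm : (M.map Complex.ofReal).det = ((M.det : ℝ) : ℂ) := by
      rw [show M.map Complex.ofReal = Complex.ofRealHom.mapMatrix M from rfl,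
        ← RingHom.map_det]
      rfl
    rw [hMcM, hdm]
    exact_mod_cast hMdet
  -- now the spectral argument
  intro hspec
  rw [spectrum.mem_iff] at hspec
  set Atilde : Matrix (Fin n ⊕ Fin n) (Fin n ⊕ Fin n) ℂ :=
    (Matrix.fromBlocks A B (1 : Matrix (Fin n) (Fin n) ℝ)
        (0 : Matrix (Fin n) (Fin n) ℝ)).map Complex.ofReal with hAtilde
  have hdet0 : ((algebraMap ℂ _ ((α:ℂ))) - Atilde).det = 0 := by
    by_contra hd
    exact hspec ((Matrix.isUnit_iff_isUnit_det _).mpr (isUnit_iff_ne_zero.mpr hd))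
  obtain ⟨v, hv0, hv⟩ := (Matrix.exists_mulVec_eq_zero_iff).mpr hdet0
  have hv' : Atilde *ᵥ v = (α:ℂ) • v := by
    have : (algebraMap ℂ (Matrix (Fin n ⊕ Fin n) (Fin n ⊕ Fin n) ℂ) (α:ℂ)) = (α:ℂ) • 1 :=
      Algebra.algebraMap_eq_smul_one _
    rw [this] at hv
    rw [Matrix.sub_mulVec, Matrix.smul_mulVec, Matrix.one_mulVec, sub_eq_zero] at hv
    exact hv.symm
  set x : Fin n → ℂ := v ∘ Sum.inl with hx
  set y : Fin n → ℂ := v ∘ Sum.inr with hy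
  have hvelim : v = Sum.elim x y := (Sum.elim_comp_inl_inr v).symm
  have hblocks : Atilde = Matrix.fromBlocks Ac Bc (1 : Matrix (Fin n) (Fin n) ℂ)
      (0 : Matrix (Fin n) (Fin n) ℂ) := by
    rw [hAtilde, Matrix.fromBlocks_map]
    congr 1 <;> ext i j <;> by_cases h : i = j <;>
      simp [Matrix.one_apply, h]
  rw [hblocks, hvelim, Matrix.fromBlocks_mulVec] at hv'
  have h2 : x = (α:ℂ) • y := by
    have := congrArg (fun f => f ∘ Sum.inr) hv'
    simp only [Sum.elim_comp_inr] at this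
    rw [Matrix.one_mulVec, Matrix.zero_mulVec, add_zero] at this
    ext i
    have := congrFun this i
    simpa using this
  have h1 : Ac *ᵥ x + Bc *ᵥ y = (α:ℂ) • x := by
    have := congrArg (fun f => f ∘ Sum.inl) hv'
    simp only [Sum.elim_comp_inl] at this
    exact this
  have hMy : Mc *ᵥ y = 0 := by
    rw [h2] at h1
    rw [Matrix.mulVec_smul] at h1
    have : (α:ℂ) • (Ac *ᵥ y) + Bc *ᵥ y = (α:ℂ)^2 • y := by
      rw [h1, smul_smul]; ring_nf
    rw [hMc, Matrix.sub_mulVec, Matrix.sub_mulVec, Matrix.smul_mulVec,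
      Matrix.smul_mulVec, Matrix.one_mulVec, ← this]
    abel
  have hy0 : y ≠ 0 := by
    intro h
    apply hv0
    rw [hvelim, h2, h]
    ext s
    cases s <;> simp
  exact hMcdet (Matrix.exists_mulVec_eq_zero_iff.mp ⟨y, hy0, hMy⟩)
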